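/- arXiv:2103.14116 — 8 statements merged into one kernel-verified Lean document; each statement's English description precedes it below -/
import Mathlib

section
/- Suppose φ: G → H and ψ: H → G are group homomorphisms with ψ ∘ φ = id_G. Then for every g in the subgroup of G generated by torsion elements, stl_H(φ(g)) = stl_G(g). -/
/-- Word length of `g` with respect to a generating set `S`:
the least `k` such that `g` is a product of `k` elements of `S`. -/
noncomputable def wl {G : Type*} [Group G] (S : Set G) (g : G) : ℕ :=
  sInf {k | ∃ l : List G, (∀ x ∈ l, x ∈ S) ∧ l.length = k ∧ l.prod = g}

/-- Stable word length of `g` with respect to `S`, defined as the infimum of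
`|g^n|_S / n` (which equals the limit by Fekete's lemma). -/
noncomputable def swl {G : Type*} [Group G] (S : Set G) (g : G) : ℝ :=
  ⨅ n : ℕ+, (wl S (g ^ (n : ℕ)) : ℝ) / (n : ℕ)

theorem stmt_3 {G H : Type*} [Group G] [Group H] (φ : G →* H) (ψ : H →* G)
    (hretr : ψ.comp φ = MonoidHom.id G)
    (g : G) (hg : g ∈ Subgroup.closure {x : G | IsOfFinOrder x}) :
    swl {x : H | IsOfFinOrder x} (φ g) = swl {x : G | IsOfFinOrder x} g := by
  have hψφ : ∀ x : G, ψ (φ x) = x := fun x => by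
    have := DFunLike.congr_fun hretr x; simpa using this
  have hwl : ∀ x : G, wl {y : H | IsOfFinOrder y} (φ x)
      = wl {y : G | IsOfFinOrder y} x := by
    intro x
    unfold wl
    congr 1
    ext k
    constructor
    · rintro ⟨l, hl, hlen, hprod⟩
      refine ⟨l.map ψ, ?_, by simp [hlen], ?_⟩
      · intro y hy
        rcases List.mem_map.1 hy with ⟨z, hz, rfl⟩
        exact ψ.isOfFinOrder (hl z hz)
      · rw [← map_list_prod, hprod, hψφ]
    · rintro ⟨l, hl, hlen, hprod⟩
      refine ⟨l.map φ, ?_, by simp [hlen], ?_⟩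
      · intro y hy
        rcases List.mem_map.1 hy with ⟨z, hz, rfl⟩
        exact φ.isOfFinOrder (hl z hz)
      · rw [← map_list_prod, hprod]
  unfold swl
  congr 1
  ext n
  rw [← map_pow, hwl]
end

section
/- For any group G and any element g in the subgroup generated by torsion elements, there exists a countable subgroup H ≤ G containing g such that stl_H(g) = stl_G(g). -/
lemma isOfFinOrder_subtype_iff {G : Type*} [Group G] {H : Subgroup G} {x : H} :
    IsOfFinOrder x ↔ IsOfFinOrder (x : G) := by
  simp only [isOfFinOrder_iff_pow_eq_one]
  refine exists_congr fun n => and_congr_right fun _ => ?_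
  rw [← SubmonoidClass.coe_pow, ← OneMemClass.coe_one H, Subtype.coe_inj]

lemma countable_closure_of_countable {G : Type*} [Group G] {s : Set G}
    (hs : s.Countable) : Countable (Subgroup.closure s) := by
  have : Countable s := hs.to_subtype
  have hsurj : Function.Surjective (FreeGroup.mk (α := s)) :=
    fun x => Quot.inductionOn x fun L => ⟨L, rfl⟩
  have : Countable (FreeGroup s) := hsurj.countable
  have hr : (FreeGroup.lift (Subtype.val : s → G)).range = Subgroup.closure s := by
    rw [FreeGroup.range_lift_eq_closure, Subtype.range_val]
  have hc : ((Subgroup.closure s : Subgroup G) : Set G).Countable := by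
    rw [← hr, MonoidHom.coe_range]
    exact Set.countable_range _
  exact hc.to_subtype

theorem stmt_5 {G : Type*} [Group G]
    (g : G) (hg : g ∈ Subgroup.closure {x : G | IsOfFinOrder x}) :
    ∃ (H : Subgroup G) (hgH : g ∈ H), Countable H ∧
      swl {x : H | IsOfFinOrder x} (⟨g, hgH⟩ : H) =
        swl {x : G | IsOfFinOrder x} g := by
  set S : Set G := {x : G | IsOfFinOrder x} with hS
  -- nonemptiness of the word-length sets
  have hmon : ∀ n : ℕ, g ^ n ∈ Submonoid.closure S := by
    intro n
    have h1 : g ^ n ∈ Subgroup.closure S := pow_mem hg n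
    have h2 : (Subgroup.closure S).toSubmonoid = Submonoid.closure (S ∪ S⁻¹) :=
      Subgroup.closure_toSubmonoid S
    have hSinv : S ∪ S⁻¹ = S := by
      apply Set.union_eq_self_of_subset_right
      intro x hx
      exact isOfFinOrder_inv_iff.mp hx
    have : g ^ n ∈ (Subgroup.closure S).toSubmonoid := h1
    rw [h2, hSinv] at this
    exact this
  have hne : ∀ n : ℕ,
      {k | ∃ l : List G, (∀ x ∈ l, x ∈ S) ∧ l.length = k ∧ l.prod = g ^ n}.Nonempty := by
    intro n
    obtain ⟨l, hl1, hl2⟩ := Submonoid.exists_list_of_mem_closure (hmon n)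
    exact ⟨l.length, l, hl1, rfl, hl2⟩
  have hL : ∀ n : ℕ, ∃ l : List G,
      (∀ x ∈ l, x ∈ S) ∧ l.length = wl S (g ^ n) ∧ l.prod = g ^ n :=
    fun n => Nat.sInf_mem (hne n)
  choose L hL1 hL2 hL3 using hL
  set T : Set G := {g} ∪ ⋃ n : ℕ, {x | x ∈ L n} with hT
  refine ⟨Subgroup.closure T, Subgroup.subset_closure (Or.inl rfl), ?_, ?_⟩
  · exact countable_closure_of_countable
      ((Set.countable_singleton g).union
        (Set.countable_iUnion fun n => (L n).finite_toSet.countable))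
  set H := Subgroup.closure T with hHdef
  have hgH : g ∈ H := Subgroup.subset_closure (Or.inl rfl)
  have hLH : ∀ n : ℕ, ∀ x ∈ L n, x ∈ H := fun n x hx =>
    Subgroup.subset_closure (Or.inr (Set.mem_iUnion.2 ⟨n, hx⟩))
  -- key : the word lengths agree
  have key : ∀ n : ℕ,
      wl {x : H | IsOfFinOrder x} ((⟨g, hgH⟩ : H) ^ n) = wl S (g ^ n) := by
    intro n
    -- the list L n, lifted into H
    set l' : List H := (L n).attach.map
      (fun x => (⟨x.1, hLH n x.1 x.2⟩ : H)) with hl'def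
    have hl'tor : ∀ y ∈ l', y ∈ {x : H | IsOfFinOrder x} := by
      intro y hy
      obtain ⟨x, hx, rfl⟩ := List.mem_map.1 hy
      exact isOfFinOrder_subtype_iff.mpr (hL1 n x.1 x.2)
    have hl'len : l'.length = wl S (g ^ n) := by
      rw [hl'def, List.length_map, List.length_attach, hL2]
    have hl'prod : l'.prod = (⟨g, hgH⟩ : H) ^ n := by
      apply Subtype.ext
      rw [SubmonoidClass.coe_pow]
      have : (l'.prod : G) = (l'.map (Subtype.val)).prod :=
        SubmonoidClass.coe_list_prod l'
      rw [this, hl'def, List.map_map]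
      have : ((L n).attach.map (Subtype.val ∘
          fun x => (⟨x.1, hLH n x.1 x.2⟩ : H))) = L n := by
        exact List.attach_map_subtype_val (L n)
      rw [this, hL3]
    have hHne : {k | ∃ l : List H, (∀ x ∈ l, x ∈ {x : H | IsOfFinOrder x}) ∧
        l.length = k ∧ l.prod = (⟨g, hgH⟩ : H) ^ n}.Nonempty :=
      ⟨l'.length, l', hl'tor, rfl, hl'prod⟩
    apply le_antisymm
    · -- wl_H ≤ wl_G : witness l'
      calc wl {x : H | IsOfFinOrder x} ((⟨g, hgH⟩ : H) ^ n)
          ≤ l'.length := Nat.sInf_le ⟨l', hl'tor, rfl, hl'prod⟩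
        _ = wl S (g ^ n) := hl'len
    · -- wl_G ≤ wl_H : push a minimal H-list down to G
      obtain ⟨m, hm1, hm2, hm3⟩ :
          ∃ m : List H, (∀ x ∈ m, x ∈ {x : H | IsOfFinOrder x}) ∧
            m.length = wl {x : H | IsOfFinOrder x} ((⟨g, hgH⟩ : H) ^ n) ∧
            m.prod = (⟨g, hgH⟩ : H) ^ n := Nat.sInf_mem hHne
      apply Nat.sInf_le
      refine ⟨m.map Subtype.val, ?_, by rw [List.length_map, hm2], ?_⟩
      · intro x hx
        obtain ⟨y, hy, rfl⟩ := List.mem_map.1 hx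
        exact isOfFinOrder_subtype_iff.mp (hm1 y hy)
      · rw [← SubmonoidClass.coe_list_prod, hm3, SubmonoidClass.coe_pow]
  unfold swl
  congr 1
  funext n
  rw [key (n : ℕ)]
end

section
/- Let φ: G → ℝ be a homogeneous quasimorphism with defect D(φ) > 0. Then for any g in the subgroup generated by torsion elements, |φ(g)|/D(φ) ≤ stl_G(g), where stl_G(g) = lim_n tl_G(g^n)/n is the stable torsion length. -/
theorem stmt_7 {G : Type*} [Group G] (φ : G → ℝ)
    (hhom : ∀ (g : G) (n : ℤ), φ (g ^ n) = n * φ g)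
    (hbdd : BddAbove (Set.range fun p : G × G => |φ (p.1 * p.2) - φ p.1 - φ p.2|))
    (hD : 0 < ⨆ p : G × G, |φ (p.1 * p.2) - φ p.1 - φ p.2|)
    (g : G) (hg : g ∈ Subgroup.closure {x : G | IsOfFinOrder x}) :
    |φ g| / (⨆ p : G × G, |φ (p.1 * p.2) - φ p.1 - φ p.2|) ≤
      swl {x : G | IsOfFinOrder x} g := by
  set D := ⨆ p : G × G, |φ (p.1 * p.2) - φ p.1 - φ p.2| with hDdef
  have hone : φ 1 = 0 := by
    have := hhom 1 0
    simpa using this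
  have hdef : ∀ a b : G, |φ (a * b) - φ a - φ b| ≤ D := by
    intro a b
    exact le_ciSup hbdd (a, b)
  -- φ vanishes on torsion elements
  have htors : ∀ x : G, IsOfFinOrder x → φ x = 0 := by
    intro x hx
    have hn : 0 < orderOf x := hx.orderOf_pos
    have hpow : x ^ (orderOf x : ℤ) = 1 := by
      rw [zpow_natCast, pow_orderOf_eq_one]
    have := hhom x (orderOf x)
    rw [hpow, hone] at this
    have hne : (orderOf x : ℝ) ≠ 0 := by positivity
    have : (orderOf x : ℝ) * φ x = 0 := by push_cast at this ⊢; linarith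
    exact (mul_eq_zero.mp this).resolve_left hne
  -- bound on products of torsion elements
  have hlist : ∀ l : List G, (∀ x ∈ l, IsOfFinOrder x) → |φ l.prod| ≤ l.length * D := by
    intro l
    induction l with
    | nil => intro _; simp [hone]
    | cons x t ih =>
      intro h
      have hx : φ x = 0 := htors x (h x (by simp))
      have ht := ih (fun y hy => h y (by simp [hy]))
      have hd := hdef x t.prod
      have : |φ (x * t.prod)| ≤ |φ x| + |φ t.prod| + D := by
        have := abs_abs_sub_abs_le_abs_sub (φ (x * t.prod)) (φ x + φ t.prod)
        have h2 : |φ (x * t.prod) - (φ x + φ t.prod)| ≤ D := by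
          rw [show φ (x * t.prod) - (φ x + φ t.prod) = φ (x * t.prod) - φ x - φ t.prod by ring]
          exact hd
        calc |φ (x * t.prod)| ≤ |φ x + φ t.prod| + |φ (x * t.prod) - (φ x + φ t.prod)| := by
              have := abs_sub_abs_le_abs_sub (φ (x * t.prod)) (φ x + φ t.prod); linarith [abs_add_le (φ x) (φ t.prod)]
          _ ≤ |φ x| + |φ t.prod| + D := by linarith [abs_add_le (φ x) (φ t.prod)]
      simp only [List.prod_cons, List.length_cons]
      push_cast
      rw [hx] at this
      simp at this
      linarith
  -- main: bound for each n
  rw [swl]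
  apply le_ciInf
  intro n
  -- g^n ∈ closure, so there is a list of torsion elements
  have hgn : (g : G) ^ (n : ℕ) ∈ Subgroup.closure {x : G | IsOfFinOrder x} :=
    pow_mem hg n
  have hgn' : (g : G) ^ (n : ℕ) ∈
      Submonoid.closure ({x : G | IsOfFinOrder x} ∪ {x : G | IsOfFinOrder x}⁻¹) := by
    rw [← Subgroup.closure_toSubmonoid]
    exact hgn
  obtain ⟨l, hl, hlprod⟩ := Submonoid.exists_list_of_mem_closure hgn'
  have hl' : ∀ x ∈ l, x ∈ {x : G | IsOfFinOrder x} := by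
    intro x hx
    rcases hl x hx with h | h
    · exact h
    · exact isOfFinOrder_inv_iff.mp h
  have hmem : wl {x : G | IsOfFinOrder x} (g ^ (n : ℕ)) ∈
      {k | ∃ l : List G, (∀ x ∈ l, x ∈ {x : G | IsOfFinOrder x}) ∧ l.length = k ∧ l.prod = g ^ (n : ℕ)} :=
    Nat.sInf_mem ⟨l.length, l, hl', rfl, hlprod⟩
  obtain ⟨m, hm1, hm2, hm3⟩ := hmem
  have hbound : |φ (g ^ (n : ℕ))| ≤ (wl {x : G | IsOfFinOrder x} (g ^ (n : ℕ)) : ℝ) * D := by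
    have := hlist m hm1
    rw [hm3, hm2] at this
    exact this
  have hphin : |φ (g ^ (n : ℕ))| = (n : ℕ) * |φ g| := by
    have := hhom g (n : ℕ)
    rw [zpow_natCast] at this
    rw [this, abs_mul]
    push_cast
    simp [abs_of_nonneg, Nat.cast_nonneg]
  rw [hphin] at hbound
  have hnpos : (0 : ℝ) < (n : ℕ) := by exact_mod_cast n.pos
  rw [div_le_div_iff₀ hD hnpos]
  nlinarith
end

section
/- Let γ_1, …, γ_m be torsion elements of E(n) with rotational parts A_1, …, A_m ∈ O(n), and let h ∈ ℝ^n. Then the translation by (A_1 ⋯ A_m − I)h can be written as a product of 4m − 2 torsion elements of the group generated by the γ_i's and the translation T_h. -/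
private lemma stmt_10_conj_prod {G : Type*} [Group G] (g : G) (L : List G) :
    (L.map (fun t => g * t * g⁻¹)).prod = g * L.prod * g⁻¹ := by
  induction L with
  | nil => simp
  | cons a L ih => simp only [List.map_cons, List.prod_cons, ih]; group

private lemma stmt_10_aux {n : ℕ}
    (h : EuclideanSpace ℝ (Fin n))
    (T : EuclideanSpace ℝ (Fin n) ≃ᵢ EuclideanSpace ℝ (Fin n))
    (hT : ∀ x, T x = x + h) :
    ∀ (m : ℕ) (γ : Fin m → (EuclideanSpace ℝ (Fin n) ≃ᵢ EuclideanSpace ℝ (Fin n)))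
      (A : Fin m → (EuclideanSpace ℝ (Fin n) ≃ₗᵢ[ℝ] EuclideanSpace ℝ (Fin n))),
      (∀ i, IsOfFinOrder (γ i)) → (∀ i, ∃ v, ∀ x, γ i x = A i x + v) →
      ∃ l : List (EuclideanSpace ℝ (Fin n) ≃ᵢ EuclideanSpace ℝ (Fin n)),
        l.length = 2 * m ∧
        (∀ t ∈ l, IsOfFinOrder t ∧ t ∈ Subgroup.closure (Set.range γ ∪ {T})) ∧
        ∀ x, l.prod x = x + ((List.ofFn A).prod h - h) := by
  intro m
  induction m with
  | zero =>
      intro γ A _ _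
      exact ⟨[], by simp, by simp, fun x => by simp⟩
  | succ m IH =>
      intro γ A htor hrot
      obtain ⟨l, hlen, hmem, hprod⟩ := IH (fun i => γ i.succ) (fun i => A i.succ)
        (fun i => htor i.succ) (fun i => hrot i.succ)
      set g := γ 0 with hg
      obtain ⟨v, hv⟩ := hrot 0
      set Q := (List.ofFn fun i => A i.succ).prod with hQ
      -- basic pointwise facts
      have hTinv : ∀ x, T⁻¹ x = x - h := by
        intro x
        have := hT (T.symm x)
        simp only [IsometryEquiv.apply_symm_apply] at this
        have : T.symm x = x - h := by rw [eq_sub_iff_add_eq, ← this]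
        exact this
      have hginv : ∀ x, g (g⁻¹ x) = x := fun x => g.apply_symm_apply x
      -- the commutator [g, T] is translation by A 0 h - h
      set b : EuclideanSpace ℝ (Fin n) ≃ᵢ EuclideanSpace ℝ (Fin n) := T * g⁻¹ * T⁻¹ with hb
      have hgb : ∀ x, (g * b) x = x + ((A 0) h - h) := by
        intro x
        have key : (A 0) (g⁻¹ (x - h)) + v = x - h := by
          have := hv (g⁻¹ (x - h)); rw [← this, hginv]
        show g (T (g⁻¹ (T⁻¹ x))) = x + ((A 0) h - h)
        rw [hTinv, hT, hv, map_add]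
        rw [add_comm ((A 0) (g⁻¹ (x - h))) ((A 0) h), add_assoc, key]
        abel
      -- conjugation by g sends translation by w to translation by A 0 w
      have hconjg : ∀ (s : EuclideanSpace ℝ (Fin n) ≃ᵢ EuclideanSpace ℝ (Fin n)) (w),
          (∀ x, s x = x + w) → ∀ x, (g * s * g⁻¹) x = x + (A 0) w := by
        intro s w hs x
        show g (s (g⁻¹ x)) = x + (A 0) w
        rw [hs, hv, map_add]
        have key : (A 0) (g⁻¹ x) + v = x := by
          have := hv (g⁻¹ x); rw [← this, hginv]
        rw [add_comm ((A 0) (g⁻¹ x)) ((A 0) w), add_assoc, key, add_comm]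
      refine ⟨(l.map (fun t => g * t * g⁻¹)) ++ [g, b], ?_, ?_, ?_⟩
      · simp [hlen]; ring
      · intro t ht
        have hgS : g ∈ Subgroup.closure (Set.range γ ∪ {T}) :=
          Subgroup.subset_closure (Or.inl ⟨0, rfl⟩)
        have hTS : T ∈ Subgroup.closure (Set.range γ ∪ {T}) :=
          Subgroup.subset_closure (Or.inr rfl)
        rcases List.mem_append.1 ht with ht | ht
        · obtain ⟨t', ht', rfl⟩ := List.mem_map.1 ht
          obtain ⟨htor', hmem'⟩ := hmem t' ht'
          constructor
          · have := (MulAut.conj g).toMonoidHom.isOfFinOrder htor'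
            simpa using this
          · have hsub : Subgroup.closure (Set.range (fun i : Fin m => γ i.succ) ∪ {T}) ≤
                Subgroup.closure (Set.range γ ∪ {T}) := by
              apply Subgroup.closure_mono
              apply Set.union_subset_union_left
              rintro x ⟨i, rfl⟩
              exact ⟨i.succ, rfl⟩
            exact Subgroup.mul_mem _ (Subgroup.mul_mem _ hgS (hsub hmem'))
              (Subgroup.inv_mem _ hgS)
        · simp only [List.mem_cons, List.not_mem_nil, or_false] at ht
          rcases ht with rfl | rfl
          · exact ⟨htor 0, hgS⟩
          · refine ⟨?_, ?_⟩
            · have : IsOfFinOrder (T * g⁻¹ * T⁻¹) := by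
                have := (MulAut.conj T).toMonoidHom.isOfFinOrder (htor 0).inv
                simpa using this
              exact this
            · exact Subgroup.mul_mem _ (Subgroup.mul_mem _ hTS
                (Subgroup.inv_mem _ hgS)) (Subgroup.inv_mem _ hTS)
      · intro x
        have hmap : (l.map (fun t => g * t * g⁻¹)).prod = g * l.prod * g⁻¹ :=
          stmt_10_conj_prod g l
        have hconjprod : ∀ y, (g * l.prod * g⁻¹) y = y + (A 0) (Q h - h) :=
          hconjg l.prod (Q h - h) hprod
        have hprodfull : ((l.map (fun t => g * t * g⁻¹)) ++ [g, b]).prod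
            = (g * l.prod * g⁻¹) * (g * b) := by
          rw [List.prod_append, hmap]
          simp [mul_assoc]
        rw [hprodfull]
        show (g * l.prod * g⁻¹) ((g * b) x) = _
        rw [hgb, hconjprod]
        have hofFn : (List.ofFn A).prod = A 0 * Q := by
          rw [List.ofFn_succ, List.prod_cons]
        rw [hofFn]
        show x + ((A 0) h - h) + (A 0) (Q h - h) = x + ((A 0) (Q h) - h)
        rw [map_sub]
        abel

/-- If `γ₁, …, γ_m` are torsion isometries of `ℝⁿ` with rotational parts
`A₁, …, A_m` and `T` is translation by `h`, then translation by
`(A₁⋯A_m − I) h` is a product of `4m − 2` torsion elements of the group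
generated by the `γᵢ` and `T`. -/
theorem stmt_10 {n : ℕ} (m : ℕ) (hm : 1 ≤ m)
    (γ : Fin m → (EuclideanSpace ℝ (Fin n) ≃ᵢ EuclideanSpace ℝ (Fin n)))
    (A : Fin m → (EuclideanSpace ℝ (Fin n) ≃ₗᵢ[ℝ] EuclideanSpace ℝ (Fin n)))
    (htor : ∀ i, IsOfFinOrder (γ i))
    (hrot : ∀ i, ∃ v, ∀ x, γ i x = A i x + v)
    (h : EuclideanSpace ℝ (Fin n))
    (T : EuclideanSpace ℝ (Fin n) ≃ᵢ EuclideanSpace ℝ (Fin n))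
    (hT : ∀ x, T x = x + h) :
    ∃ l : List (EuclideanSpace ℝ (Fin n) ≃ᵢ EuclideanSpace ℝ (Fin n)),
      l.length = 4 * m - 2 ∧
      (∀ t ∈ l, IsOfFinOrder t ∧ t ∈ Subgroup.closure (Set.range γ ∪ {T})) ∧
      ∀ x, l.prod x = x + ((List.ofFn A).prod h - h) := by
  obtain ⟨l, hlen, hmem, hprod⟩ := stmt_10_aux h T hT m γ A htor hrot
  refine ⟨List.replicate (2 * m - 2) 1 ++ l, ?_, ?_, ?_⟩
  · simp [hlen]; omega
  · intro t ht
    rcases List.mem_append.1 ht with ht | ht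
    · have : t = 1 := List.eq_of_mem_replicate ht
      subst this
      exact ⟨IsOfFinOrder.one, Subgroup.one_mem _⟩
    · exact hmem t ht
  · intro x
    rw [List.prod_append, List.prod_replicate, one_pow, one_mul]
    exact hprod x
end

section
/- Let Γ be a subgroup of E(n) generated by torsion elements, and let X ⊆ ℝ^n be the linear span of the images of A − I over all rotational parts A of elements of Γ. Then every element γ ∈ Γ has translational part lying in X; in particular every translation in Γ is a translation by a vector in X. -/
/-- If `Γ ≤ E(n)` is generated by torsion elements and `X` is the span of the
images of `A − I` over rotational parts `A` of elements of `Γ`, then every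
element of `Γ` has translational part in `X`. -/
theorem stmt_11 {n : ℕ}
    (rot : (EuclideanSpace ℝ (Fin n) ≃ᵢ EuclideanSpace ℝ (Fin n)) →
      (EuclideanSpace ℝ (Fin n) ≃ₗᵢ[ℝ] EuclideanSpace ℝ (Fin n)))
    (hrot : ∀ (γ : EuclideanSpace ℝ (Fin n) ≃ᵢ EuclideanSpace ℝ (Fin n)) (x),
      γ x = rot γ x + γ 0)
    (Γ : Subgroup (EuclideanSpace ℝ (Fin n) ≃ᵢ EuclideanSpace ℝ (Fin n)))
    (hgen : Γ = Subgroup.closure {t | t ∈ Γ ∧ IsOfFinOrder t}) :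
    ∀ γ ∈ Γ, (γ : EuclideanSpace ℝ (Fin n) ≃ᵢ EuclideanSpace ℝ (Fin n)) 0 ∈
      Submodule.span ℝ (⋃ δ ∈ Γ,
        Set.range fun x : EuclideanSpace ℝ (Fin n) => rot δ x - x) := by
  intro γ hγ
  set X := Submodule.span ℝ (⋃ δ ∈ Γ,
      Set.range fun x : EuclideanSpace ℝ (Fin n) => rot δ x - x) with hX
  have hmem : ∀ δ ∈ Γ, ∀ x : EuclideanSpace ℝ (Fin n), rot δ x - x ∈ X := by
    intro δ hδ x
    exact Submodule.subset_span (Set.mem_biUnion hδ ⟨x, rfl⟩)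
  have hle : Subgroup.closure {t | t ∈ Γ ∧ IsOfFinOrder t} ≤ Γ := hgen ▸ le_rfl
  rw [hgen] at hγ
  induction hγ using Subgroup.closure_induction with
  | mem t ht =>
    obtain ⟨htΓ, htfin⟩ := ht
    set k := orderOf t with hk
    have hkpos : 0 < k := htfin.orderOf_pos
    set p : EuclideanSpace ℝ (Fin n) :=
      (k : ℝ)⁻¹ • ∑ i ∈ Finset.range k, (t ^ i) 0 with hp
    have hterm : ∀ i : ℕ, rot t ((t ^ i) 0) = (t ^ (i + 1)) 0 - t 0 := by
      intro i
      have h2 : (t ^ (i + 1)) 0 = t ((t ^ i) 0) := by rw [pow_succ']; rfl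
      rw [h2, hrot t ((t ^ i) 0)]; abel
    have hshift : ∑ i ∈ Finset.range k, (t ^ (i + 1)) 0
        = ∑ i ∈ Finset.range k, (t ^ i) 0 := by
      have h0 : (t ^ 0) 0 = 0 := by simp
      have hk0 : (t ^ k) 0 = 0 := by rw [hk, pow_orderOf_eq_one]; rfl
      have := Finset.sum_range_succ' (fun i => (t ^ i) 0) k
      rw [Finset.sum_range_succ, h0, hk0, add_zero, add_zero] at this
      exact this.symm
    have hfix : t p = p := by
      rw [hrot t p, hp, map_smul, map_sum]
      rw [Finset.sum_congr rfl fun i _ => hterm i, Finset.sum_sub_distrib,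
        Finset.sum_const, Finset.card_range, hshift, smul_sub]
      have hkne : (k : ℝ) ≠ 0 := Nat.cast_ne_zero.mpr hkpos.ne'
      rw [← Nat.cast_smul_eq_nsmul ℝ, smul_smul, inv_mul_cancel₀ hkne, one_smul]
      abel
    have heq : t 0 = -(rot t p - p) := by
      have h := hrot t p
      rw [hfix] at h
      rw [neg_sub, eq_comm, sub_eq_iff_eq_add]
      exact h.trans (add_comm _ _)
    rw [heq]
    exact X.neg_mem (hmem t htΓ p)
  | one => simpa using X.zero_mem
  | mul a b ha hb iha ihb =>
    have h : (a * b) 0 = (rot a (b 0) - b 0) + b 0 + a 0 := by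
      have : (a * b) 0 = a (b 0) := rfl
      rw [this, hrot a (b 0)]; abel
    rw [h]
    exact X.add_mem (X.add_mem (hmem a (hle ha) _) ihb) iha
  | inv a ha iha =>
    have key : rot a (a⁻¹ 0) + a 0 = 0 := by
      have := hrot a (a⁻¹ 0)
      simpa using this.symm
    have h : a⁻¹ 0 = -(rot a (a⁻¹ 0) - a⁻¹ 0) + -(a 0) + (rot a (a⁻¹ 0) + a 0) := by
      abel
    rw [h, key, add_zero]
    exact X.add_mem (X.neg_mem (hmem a (hle ha) _)) (X.neg_mem iha)
end

section
/- In the (3,3,3)-triangle group Γ = ⟨a,b,c | a² = b² = c² = (ab)³ = (bc)³ = (ca)³ = 1⟩, every element is a product of at most four conjugates of the generators a, b, c (i.e., at most four reflections); in particular Γ is boundedly generated by torsion elements. -/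
/-- Relators of the (3,3,3)-triangle group
`⟨a,b,c | a² = b² = c² = (ab)³ = (bc)³ = (ca)³ = 1⟩`. -/
def rels333 : Set (FreeGroup (Fin 3)) :=
  {FreeGroup.of 0 ^ 2, FreeGroup.of 1 ^ 2, FreeGroup.of 2 ^ 2,
   (FreeGroup.of 0 * FreeGroup.of 1) ^ 3,
   (FreeGroup.of 1 * FreeGroup.of 2) ^ 3,
   (FreeGroup.of 2 * FreeGroup.of 0) ^ 3}

namespace Tri
abbrev G := PresentedGroup rels333
def a : G := PresentedGroup.of 0
def b : G := PresentedGroup.of 1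
def c : G := PresentedGroup.of 2

lemma rel_one {r : FreeGroup (Fin 3)} (hr : r ∈ rels333) : PresentedGroup.mk rels333 r = 1 :=
  (QuotientGroup.eq_one_iff r).mpr (Subgroup.subset_normalClosure hr)

lemma haa1 : a * a = 1 := by
  have := rel_one (show FreeGroup.of 0 ^ 2 ∈ rels333 by simp [rels333])
  simpa [sq, a, PresentedGroup.of, map_mul] using this

lemma hbb1 : b * b = 1 := by
  have := rel_one (show FreeGroup.of 1 ^ 2 ∈ rels333 by simp [rels333])
  simpa [sq, b, PresentedGroup.of, map_mul] using this

lemma hcc1 : c * c = 1 := by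
  have := rel_one (show FreeGroup.of 2 ^ 2 ∈ rels333 by simp [rels333])
  simpa [sq, c, PresentedGroup.of, map_mul] using this

lemma pow3 (x : G) (h : x ^ 3 = 1) : x * (x * x) = 1 := by
  rw [pow_succ, pow_succ, pow_one, mul_assoc] at h; exact h

lemma hab3 : (a * b) * ((a * b) * (a * b)) = 1 := by
  have := rel_one (show (FreeGroup.of 0 * FreeGroup.of 1) ^ 3 ∈ rels333 by simp [rels333])
  exact pow3 _ (by simpa [a, b, PresentedGroup.of, map_mul, map_pow] using this)

lemma hbc3 : (b * c) * ((b * c) * (b * c)) = 1 := by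
  have := rel_one (show (FreeGroup.of 1 * FreeGroup.of 2) ^ 3 ∈ rels333 by simp [rels333])
  exact pow3 _ (by simpa [b, c, PresentedGroup.of, map_mul, map_pow] using this)

lemma hca3 : (c * a) * ((c * a) * (c * a)) = 1 := by
  have := rel_one (show (FreeGroup.of 2 * FreeGroup.of 0) ^ 3 ∈ rels333 by simp [rels333])
  exact pow3 _ (by simpa [c, a, PresentedGroup.of, map_mul, map_pow] using this)

/-- tail versions -/
lemma ha : ∀ x : G, a * (a * x) = x := fun x => by rw [← mul_assoc, haa1, one_mul]
lemma hb : ∀ x : G, b * (b * x) = x := fun x => by rw [← mul_assoc, hbb1, one_mul]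
lemma hc : ∀ x : G, c * (c * x) = x := fun x => by rw [← mul_assoc, hcc1, one_mul]

lemma inva : a⁻¹ = a := by rw [← mul_one a⁻¹, ← haa1, ← mul_assoc, inv_mul_cancel, one_mul]
lemma invb : b⁻¹ = b := by rw [← mul_one b⁻¹, ← hbb1, ← mul_assoc, inv_mul_cancel, one_mul]
lemma invc : c⁻¹ = c := by rw [← mul_one c⁻¹, ← hcc1, ← mul_assoc, inv_mul_cancel, one_mul]

lemma braid (x y : G) (hx : ∀ t : G, x * (x * t) = t) (hy : ∀ t : G, y * (y * t) = t)
    (h3 : (x * y) * ((x * y) * (x * y)) = 1) : ∀ z : G, y * (x * (y * z)) = x * (y * (x * z)) := by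
  have e1 : ∀ w : G, x * (y * (x * (y * (x * (y * w))))) = w := by
    intro w
    have := congrArg (· * w) h3
    simpa [mul_assoc] using this
  intro z
  have h := congrArg (fun t => x * (y * (x * t))) (e1 z).symm
  simp only [hx, hy] at h
  exact h.symm

lemma hba : ∀ z : G, b * (a * (b * z)) = a * (b * (a * z)) := braid a b ha hb hab3
lemma hbcr : ∀ z : G, b * (c * (b * z)) = c * (b * (c * z)) := fun z => (braid b c hb hc hbc3 z).symm
lemma hcar : ∀ z : G, c * (a * (c * z)) = a * (c * (a * z)) := fun z => (braid c a hc ha hca3 z).symm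

lemma hbaE : b * (a * b) = a * (b * a) := by have := hba 1; simpa using this
lemma hbcE : b * (c * b) = c * (b * c) := by have := hbcr 1; simpa using this
lemma hcaE : c * (a * c) = a * (c * a) := by have := hcar 1; simpa using this

def t1 : G := c * (a * (b * a))
def t2 : G := b * (c * (a * (b * (a * b))))

lemma t1inv : t1⁻¹ = a * (b * (a * c)) := by
  apply inv_eq_of_mul_eq_one_right
  simp only [t1, mul_assoc, ha, hb, hc, hba, hbcr, hcar, hbaE, hbcE, hcaE, haa1, hbb1, hcc1,
    one_mul, mul_one]

lemma t2inv : t2⁻¹ = b * (a * (b * (a * (c * b)))) := by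
  apply inv_eq_of_mul_eq_one_right
  simp only [t2, mul_assoc, ha, hb, hc, hba, hbcr, hcar, hbaE, hbcE, hcaE, haa1, hbb1, hcc1,
    one_mul, mul_one]

lemma hcomm : Commute t1 t2 := by
  have h : t1 * (t2 * t1⁻¹) = t2 := by
    rw [t1inv]
    simp only [t1, t2, mul_assoc, ha, hb, hc, hba, hbcr, hcar, hbaE, hbcE, hcaE, haa1, hbb1, hcc1,
      one_mul, mul_one]
  unfold Commute SemiconjBy
  calc t1 * t2 = t1 * (t2 * t1⁻¹) * t1 := by group
  _ = t2 * t1 := by rw [h]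

lemma id3 : a * (t2 * a) = t2⁻¹ := by
  rw [t2inv]
  simp only [t2, mul_assoc, ha, hb, hc, hba, hbcr, hcar, hbaE, hbcE, hcaE, haa1, hbb1, hcc1,
    one_mul, mul_one]

lemma id2 : a * (t1 * a) = t1 * t2⁻¹ := by
  rw [t2inv]
  simp only [t1, t2, mul_assoc, ha, hb, hc, hba, hbcr, hcar, hbaE, hbcE, hcaE, haa1, hbb1, hcc1,
    one_mul, mul_one]

lemma bc_eq : b * c = t2 * (a * b) := by
  simp only [t1, t2, mul_assoc, ha, hb, hc, hba, hbcr, hcar, hbaE, hbcE, hcaE, haa1, hbb1, hcc1,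
    one_mul, mul_one]

lemma cb_eq : c * b = t1 * (b * a) := by
  simp only [t1, t2, mul_assoc, ha, hb, hc, hba, hbcr, hcar, hbaE, hbcE, hcaE, haa1, hbb1, hcc1,
    one_mul, mul_one]

lemma ca_eq : c * a = t1 * (a * b) := by
  simp only [t1, t2, mul_assoc, ha, hb, hc, hba, hbcr, hcar, hbaE, hbcE, hcaE, haa1, hbb1, hcc1,
    one_mul, mul_one]

lemma ac_eq : a * c = t1 * (t2⁻¹ * (b * a)) := by
  rw [t2inv]
  simp only [t1, t2, mul_assoc, ha, hb, hc, hba, hbcr, hcar, hbaE, hbcE, hcaE, haa1, hbb1, hcc1,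
    one_mul, mul_one]

lemma c_eq : c = t1 * (a * (b * a)) := by
  simp only [t1, mul_assoc, ha, hb, hc, hba, hbcr, hcar, hbaE, hbcE, hcaE, haa1, hbb1, hcc1,
    one_mul, mul_one]


def T (m n : ℤ) : G := t1 ^ m * t2 ^ n

lemma Tmul (m n p q : ℤ) : T m n * T p q = T (m + p) (n + q) := by
  unfold T
  rw [mul_assoc, ← mul_assoc (t2 ^ n), ← (hcomm.zpow_zpow p n).eq, mul_assoc, ← zpow_add,
    ← mul_assoc, ← zpow_add]

lemma Tinv (m n : ℤ) : (T m n)⁻¹ = T (-m) (-n) := by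
  unfold T
  rw [mul_inv_rev, ← zpow_neg, ← zpow_neg]
  exact ((hcomm.zpow_zpow (-m) (-n)).eq).symm

lemma conjA1 : a * t1 * a = t1 * t2⁻¹ := by rw [mul_assoc]; exact id2
lemma conjA2 : a * t2 * a = t2⁻¹ := by rw [mul_assoc]; exact id3
lemma conjB1 : b * t1 * b = t2 := by simp only [t1, t2, mul_assoc]
lemma conjB2 : b * t2 * b = t1 := by
  have h := conjB1
  calc b * t2 * b = b * (b * t1 * b) * b := by rw [h]
  _ = t1 := by
    simp only [mul_assoc, hb, hbb1, mul_one]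

lemma conj_decomp (u : G) (m n : ℤ) (x y : G) (h1 : u * t1 * u⁻¹ = x) (h2 : u * t2 * u⁻¹ = y) :
    u * T m n * u⁻¹ = x ^ m * y ^ n := by
  unfold T
  have e1 : u * t1 ^ m * u⁻¹ = x ^ m := by rw [← h1]; simp [conj_zpow]
  have e2 : u * t2 ^ n * u⁻¹ = y ^ n := by rw [← h2]; simp [conj_zpow]
  calc u * (t1 ^ m * t2 ^ n) * u⁻¹ = (u * t1 ^ m * u⁻¹) * (u * t2 ^ n * u⁻¹) := by group
  _ = x ^ m * y ^ n := by rw [e1, e2]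

lemma swA (m n : ℤ) : a * T m n = T m (-(m + n)) * a := by
  have key : a * T m n * a⁻¹ = T m (-(m + n)) := by
    rw [conj_decomp a m n (t1 * t2⁻¹) t2⁻¹ (by rw [inva]; exact conjA1) (by rw [inva]; exact conjA2)]
    rw [(hcomm.inv_right).mul_zpow, inv_zpow', inv_zpow']
    unfold T
    rw [mul_assoc, ← zpow_add, ← neg_add]
  calc a * T m n = a * T m n * a⁻¹ * a := by group
  _ = T m (-(m + n)) * a := by rw [key]

lemma swB (m n : ℤ) : b * T m n = T n m * b := by
  have key : b * T m n * b⁻¹ = T n m := by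
    rw [conj_decomp b m n t2 t1 (by rw [invb]; exact conjB1) (by rw [invb]; exact conjB2)]
    exact ((hcomm.zpow_zpow n m).eq).symm
  calc b * T m n = b * T m n * b⁻¹ * b := by group
  _ = T n m * b := by rw [key]


def F : Fin 6 → G
  | 0 => 1
  | 1 => a
  | 2 => b
  | 3 => a * b
  | 4 => b * a
  | 5 => a * (b * a)

def tbl : Fin 6 → Fin 6 → Fin 6
  | 0 => fun k => match k with
    | 0 => 0
    | 1 => 1
    | 2 => 2
    | 3 => 3
    | 4 => 4
    | 5 => 5
  | 1 => fun k => match k with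
    | 0 => 1
    | 1 => 0
    | 2 => 3
    | 3 => 2
    | 4 => 5
    | 5 => 4
  | 2 => fun k => match k with
    | 0 => 2
    | 1 => 4
    | 2 => 0
    | 3 => 5
    | 4 => 1
    | 5 => 3
  | 3 => fun k => match k with
    | 0 => 3
    | 1 => 5
    | 2 => 1
    | 3 => 4
    | 4 => 0
    | 5 => 2
  | 4 => fun k => match k with
    | 0 => 4
    | 1 => 2
    | 2 => 5
    | 3 => 0
    | 4 => 3
    | 5 => 1
  | 5 => fun k => match k with
    | 0 => 5
    | 1 => 3
    | 2 => 4
    | 3 => 1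
    | 4 => 2
    | 5 => 0

def itbl : Fin 6 → Fin 6
  | 0 => 0
  | 1 => 1
  | 2 => 2
  | 3 => 4
  | 4 => 3
  | 5 => 5

lemma mulF : ∀ j k, F j * F k = F (tbl j k) := by
  intro j k
  fin_cases j <;> fin_cases k <;>
    simp [F, tbl, mul_assoc, ha, hb, hc, hba, hbcr, hcar, hbaE, hbcE, hcaE, haa1, hbb1, hcc1]

lemma invF : ∀ j, (F j)⁻¹ = F (itbl j) := by
  intro j
  fin_cases j <;> simp [F, itbl, mul_inv_rev, inva, invb, invc, mul_assoc]


lemma swAB (p q : ℤ) : (a * b) * T p q = T q (-(p + q)) * (a * b) := by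
  calc (a * b) * T p q = a * (b * T p q) := by rw [mul_assoc]
  _ = a * (T q p * b) := by rw [swB]
  _ = (a * T q p) * b := by rw [mul_assoc]
  _ = (T q (-(q + p)) * a) * b := by rw [swA]
  _ = T q (-(p + q)) * (a * b) := by rw [mul_assoc, add_comm q p]

lemma swBA (p q : ℤ) : (b * a) * T p q = T (-(p + q)) p * (b * a) := by
  calc (b * a) * T p q = b * (a * T p q) := by rw [mul_assoc]
  _ = b * (T p (-(p + q)) * a) := by rw [swA]
  _ = (b * T p (-(p + q))) * a := by rw [mul_assoc]
  _ = (T (-(p + q)) p * b) * a := by rw [swB]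
  _ = T (-(p + q)) p * (b * a) := by rw [mul_assoc]

lemma swF (j : Fin 6) (p q : ℤ) : ∃ A B : ℤ, F j * T p q = T A B * F j := by
  fin_cases j
  · exact ⟨p, q, by simp [F]⟩
  · exact ⟨p, -(p + q), by simpa [F] using swA p q⟩
  · exact ⟨q, p, by simpa [F] using swB p q⟩
  · exact ⟨q, -(p + q), swAB p q⟩
  · exact ⟨-(p + q), p, swBA p q⟩
  · refine ⟨-(p + q), q, ?_⟩
    show (a * (b * a)) * T p q = T (-(p + q)) q * (a * (b * a))
    calc (a * (b * a)) * T p q = a * (b * (a * T p q)) := by rw [mul_assoc, mul_assoc]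
    _ = a * (b * (T p (-(p + q)) * a)) := by rw [swA]
    _ = a * ((b * T p (-(p + q))) * a) := by rw [mul_assoc]
    _ = a * ((T (-(p + q)) p * b) * a) := by rw [swB]
    _ = (a * T (-(p + q)) p) * (b * a) := by rw [mul_assoc, mul_assoc]
    _ = (T (-(p + q)) (-(-(p + q) + p)) * a) * (b * a) := by rw [swA]
    _ = T (-(p + q)) q * (a * (b * a)) := by rw [mul_assoc, show -(-(p + q) + p) = q by ring]

lemma mulP (m n p q A B : ℤ) (j k : Fin 6) (hs : F j * T p q = T A B * F j) :
    (T m n * F j) * (T p q * F k) = T (m + A) (n + B) * F (tbl j k) := by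
  calc (T m n * F j) * (T p q * F k) = T m n * ((F j * T p q) * F k) := by
        rw [mul_assoc, mul_assoc]
  _ = T m n * (T A B * (F j * F k)) := by rw [hs, mul_assoc]
  _ = (T m n * T A B) * (F j * F k) := by rw [mul_assoc]
  _ = T (m + A) (n + B) * F (tbl j k) := by rw [Tmul, mulF]

lemma nf (g : G) : ∃ (m n : ℤ) (j : Fin 6), g = T m n * F j := by
  have hmem : g ∈ Subgroup.closure (Set.range (PresentedGroup.of : Fin 3 → G)) := by
    rw [PresentedGroup.closure_range_of]; trivial
  induction hmem using Subgroup.closure_induction with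
  | mem x hx =>
    obtain ⟨i, rfl⟩ := hx
    fin_cases i
    · exact ⟨0, 0, 1, by show a = T 0 0 * F 1; simp [T, F]⟩
    · exact ⟨0, 0, 2, by show b = T 0 0 * F 2; simp [T, F]⟩
    · refine ⟨1, 0, 5, ?_⟩
      show c = T 1 0 * F 5
      have : T 1 0 = t1 := by simp [T]
      rw [this]
      simpa [F] using c_eq
  | one => exact ⟨0, 0, 0, by simp [T, F]⟩
  | mul x y _ _ hx hy =>
    obtain ⟨m, n, j, rfl⟩ := hx
    obtain ⟨p, q, k, rfl⟩ := hy
    obtain ⟨A, B, hs⟩ := swF j p q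
    exact ⟨m + A, n + B, tbl j k, (mulP m n p q A B j k hs).symm ▸ rfl⟩
  | inv x _ hx =>
    obtain ⟨m, n, j, rfl⟩ := hx
    obtain ⟨A, B, hs⟩ := swF (itbl j) (-m) (-n)
    refine ⟨A, B, itbl j, ?_⟩
    rw [mul_inv_rev, invF, Tinv, hs]


lemma conjRot3 (s u p q : ℤ) :
    T s u * (T p q * (a * b)) * (T s u)⁻¹ = T (p + s - u) (q + s + 2*u) * (a * b) := by
  calc T s u * (T p q * (a * b)) * (T s u)⁻¹
      = T s u * (T p q * ((a * b) * T (-s) (-u))) := by rw [Tinv]; group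
    _ = T s u * (T p q * (T (-u) (-(-s + -u)) * (a * b))) := by rw [swAB]
    _ = (T s u * (T p q * T (-u) (-(-s + -u)))) * (a * b) := by group
    _ = T (s + (p + -u)) (u + (q + -(-s + -u))) * (a * b) := by rw [Tmul, Tmul]
    _ = T (p + s - u) (q + s + 2*u) * (a * b) := by
        rw [show s + (p + -u) = p + s - u by ring, show u + (q + -(-s + -u)) = q + s + 2*u by ring]

lemma conjRot4 (s u p q : ℤ) :
    T s u * (T p q * (b * a)) * (T s u)⁻¹ = T (p + 2*s + u) (q + u - s) * (b * a) := by
  calc T s u * (T p q * (b * a)) * (T s u)⁻¹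
      = T s u * (T p q * ((b * a) * T (-s) (-u))) := by rw [Tinv]; group
    _ = T s u * (T p q * (T (-(-s + -u)) (-s) * (b * a))) := by rw [swBA]
    _ = (T s u * (T p q * T (-(-s + -u)) (-s))) * (b * a) := by group
    _ = T (s + (p + -(-s + -u))) (u + (q + -s)) * (b * a) := by rw [Tmul, Tmul]
    _ = T (p + 2*s + u) (q + u - s) * (b * a) := by
        rw [show s + (p + -(-s + -u)) = p + 2*s + u by ring, show u + (q + -s) = q + u - s by ring]

lemma baseAB0 : T 0 0 * (a * b) = PresentedGroup.of 0 * PresentedGroup.of 1 := by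
  show T 0 0 * (a * b) = a * b
  simp [T]

lemma baseAB1 : T 1 0 * (a * b) = PresentedGroup.of 2 * PresentedGroup.of 0 := by
  show T 1 0 * (a * b) = c * a
  rw [ca_eq]; simp [T]

lemma baseAB2 : T 0 1 * (a * b) = PresentedGroup.of 1 * PresentedGroup.of 2 := by
  show T 0 1 * (a * b) = b * c
  rw [bc_eq]; simp [T]

lemma baseBA0 : T 0 0 * (b * a) = PresentedGroup.of 1 * PresentedGroup.of 0 := by
  show T 0 0 * (b * a) = b * a
  simp [T]

lemma baseBA1 : T 1 0 * (b * a) = PresentedGroup.of 2 * PresentedGroup.of 1 := by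
  show T 1 0 * (b * a) = c * b
  rw [cb_eq]; simp [T]

lemma baseBA2 : T 1 (-1) * (b * a) = PresentedGroup.of 0 * PresentedGroup.of 2 := by
  show T 1 (-1) * (b * a) = a * c
  rw [ac_eq]; simp [T, zpow_neg, mul_assoc]

lemma rotAB (m n : ℤ) : ∃ (h : G) (x y : Fin 3),
    T m n * (a * b) = h * (PresentedGroup.of x * PresentedGroup.of y) * h⁻¹ := by
  obtain ⟨t, ht⟩ : ∃ t, m - n = 3*t ∨ m - n = 3*t + 1 ∨ m - n = 3*t + 2 := ⟨(m - n)/3, by omega⟩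
  rcases ht with h | h | h
  · refine ⟨T (m - t) (-t), 0, 1, ?_⟩
    rw [← baseAB0, conjRot3]
    rw [show (0 : ℤ) + (m - t) - (-t) = m by ring, show (0 : ℤ) + (m - t) + 2*(-t) = n by omega]
  · refine ⟨T (m - 1 - t) (-t), 2, 0, ?_⟩
    rw [← baseAB1, conjRot3]
    rw [show (1 : ℤ) + (m - 1 - t) - (-t) = m by ring,
      show (0 : ℤ) + (m - 1 - t) + 2*(-t) = n by omega]
  · refine ⟨T (m - t - 1) (-(t+1)), 1, 2, ?_⟩
    rw [← baseAB2, conjRot3]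
    rw [show (0 : ℤ) + (m - t - 1) - (-(t+1)) = m by ring,
      show (1 : ℤ) + (m - t - 1) + 2*(-(t+1)) = n by omega]

lemma rotBA (m n : ℤ) : ∃ (h : G) (x y : Fin 3),
    T m n * (b * a) = h * (PresentedGroup.of x * PresentedGroup.of y) * h⁻¹ := by
  obtain ⟨t, ht⟩ : ∃ t, m - n = 3*t ∨ m - n = 3*t + 1 ∨ m - n = 3*t + 2 := ⟨(m - n)/3, by omega⟩
  rcases ht with h | h | h
  · refine ⟨T t (n + t), 1, 0, ?_⟩
    rw [← baseBA0, conjRot4]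
    rw [show (0 : ℤ) + 2*t + (n + t) = m by omega, show (0 : ℤ) + (n + t) - t = n by ring]
  · refine ⟨T t (n + t), 2, 1, ?_⟩
    rw [← baseBA1, conjRot4]
    rw [show (1 : ℤ) + 2*t + (n + t) = m by omega, show (0 : ℤ) + (n + t) - t = n by ring]
  · refine ⟨T t (n + 1 + t), 0, 2, ?_⟩
    rw [← baseBA2, conjRot4]
    rw [show (1 : ℤ) + 2*t + (n + 1 + t) = m by omega,
      show (-1 : ℤ) + (n + 1 + t) - t = n by ring]

/-- a conjugate of a generator -/
def IsRefl (x : G) : Prop := ∃ (i : Fin 3) (t : G), x = t * PresentedGroup.of i * t⁻¹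

lemma refl_of (i : Fin 3) : IsRefl (PresentedGroup.of i) := ⟨i, 1, by simp⟩

lemma refl_conj (h : G) (i : Fin 3) : IsRefl (h * PresentedGroup.of i * h⁻¹) := ⟨i, h, rfl⟩

lemma main_decomp (g : G) : ∃ l : List G, l.length ≤ 4 ∧ (∀ x ∈ l, IsRefl x) ∧ l.prod = g := by
  obtain ⟨m, n, j, rfl⟩ := nf g
  fin_cases j
  · -- F 0 = 1 : translation, 4 reflections
    obtain ⟨h, x, y, hr⟩ := rotAB m n
    refine ⟨[h * PresentedGroup.of x * h⁻¹, h * PresentedGroup.of y * h⁻¹, b, a], by simp, ?_, ?_⟩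
    · intro z hz
      simp only [List.mem_cons, List.not_mem_nil, or_false] at hz
      rcases hz with rfl | rfl | rfl | rfl
      exacts [refl_conj h x, refl_conj h y, refl_of 1, refl_of 0]
    · show (h * PresentedGroup.of x * h⁻¹) * ((h * PresentedGroup.of y * h⁻¹) * (b * (a * 1))) =
        T m n * F 0
      calc (h * PresentedGroup.of x * h⁻¹) * ((h * PresentedGroup.of y * h⁻¹) * (b * (a * 1)))
          = (h * (PresentedGroup.of x * PresentedGroup.of y) * h⁻¹) * (b * a) := by group
        _ = (T m n * (a * b)) * (b * a) := by rw [hr]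
        _ = T m n * F 0 := by
            show T m n * (a * b) * (b * a) = T m n * 1
            simp only [mul_assoc, hb, haa1, mul_one]
  · -- F 1 = a
    obtain ⟨h, x, y, hr⟩ := rotAB m n
    refine ⟨[h * PresentedGroup.of x * h⁻¹, h * PresentedGroup.of y * h⁻¹, b], by simp, ?_, ?_⟩
    · intro z hz
      simp only [List.mem_cons, List.not_mem_nil, or_false] at hz
      rcases hz with rfl | rfl | rfl
      exacts [refl_conj h x, refl_conj h y, refl_of 1]
    · show (h * PresentedGroup.of x * h⁻¹) * ((h * PresentedGroup.of y * h⁻¹) * (b * 1)) =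
        T m n * F 1
      calc (h * PresentedGroup.of x * h⁻¹) * ((h * PresentedGroup.of y * h⁻¹) * (b * 1))
          = (h * (PresentedGroup.of x * PresentedGroup.of y) * h⁻¹) * b := by group
        _ = (T m n * (a * b)) * b := by rw [hr]
        _ = T m n * F 1 := by
            show T m n * (a * b) * b = T m n * a
            simp only [mul_assoc, hbb1, mul_one]
  · -- F 2 = b
    obtain ⟨h, x, y, hr⟩ := rotBA m n
    refine ⟨[h * PresentedGroup.of x * h⁻¹, h * PresentedGroup.of y * h⁻¹, a], by simp, ?_, ?_⟩
    · intro z hz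
      simp only [List.mem_cons, List.not_mem_nil, or_false] at hz
      rcases hz with rfl | rfl | rfl
      exacts [refl_conj h x, refl_conj h y, refl_of 0]
    · show (h * PresentedGroup.of x * h⁻¹) * ((h * PresentedGroup.of y * h⁻¹) * (a * 1)) =
        T m n * F 2
      calc (h * PresentedGroup.of x * h⁻¹) * ((h * PresentedGroup.of y * h⁻¹) * (a * 1))
          = (h * (PresentedGroup.of x * PresentedGroup.of y) * h⁻¹) * a := by group
        _ = (T m n * (b * a)) * a := by rw [hr]
        _ = T m n * F 2 := by
            show T m n * (b * a) * a = T m n * b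
            simp only [mul_assoc, haa1, mul_one]
  · -- F 3 = a * b
    obtain ⟨h, x, y, hr⟩ := rotAB m n
    refine ⟨[h * PresentedGroup.of x * h⁻¹, h * PresentedGroup.of y * h⁻¹], by simp, ?_, ?_⟩
    · intro z hz
      simp only [List.mem_cons, List.not_mem_nil, or_false] at hz
      rcases hz with rfl | rfl
      exacts [refl_conj h x, refl_conj h y]
    · show (h * PresentedGroup.of x * h⁻¹) * ((h * PresentedGroup.of y * h⁻¹) * 1) = T m n * F 3
      calc (h * PresentedGroup.of x * h⁻¹) * ((h * PresentedGroup.of y * h⁻¹) * 1)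
          = h * (PresentedGroup.of x * PresentedGroup.of y) * h⁻¹ := by group
        _ = T m n * F 3 := by rw [← hr]; rfl
  · -- F 4 = b * a
    obtain ⟨h, x, y, hr⟩ := rotBA m n
    refine ⟨[h * PresentedGroup.of x * h⁻¹, h * PresentedGroup.of y * h⁻¹], by simp, ?_, ?_⟩
    · intro z hz
      simp only [List.mem_cons, List.not_mem_nil, or_false] at hz
      rcases hz with rfl | rfl
      exacts [refl_conj h x, refl_conj h y]
    · show (h * PresentedGroup.of x * h⁻¹) * ((h * PresentedGroup.of y * h⁻¹) * 1) = T m n * F 4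
      calc (h * PresentedGroup.of x * h⁻¹) * ((h * PresentedGroup.of y * h⁻¹) * 1)
          = h * (PresentedGroup.of x * PresentedGroup.of y) * h⁻¹ := by group
        _ = T m n * F 4 := by rw [← hr]; rfl
  · -- F 5 = a * (b * a)
    obtain ⟨h, x, y, hr⟩ := rotAB m n
    refine ⟨[h * PresentedGroup.of x * h⁻¹, h * PresentedGroup.of y * h⁻¹, a], by simp, ?_, ?_⟩
    · intro z hz
      simp only [List.mem_cons, List.not_mem_nil, or_false] at hz
      rcases hz with rfl | rfl | rfl
      exacts [refl_conj h x, refl_conj h y, refl_of 0]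
    · show (h * PresentedGroup.of x * h⁻¹) * ((h * PresentedGroup.of y * h⁻¹) * (a * 1)) =
        T m n * F 5
      calc (h * PresentedGroup.of x * h⁻¹) * ((h * PresentedGroup.of y * h⁻¹) * (a * 1))
          = (h * (PresentedGroup.of x * PresentedGroup.of y) * h⁻¹) * a := by group
        _ = (T m n * (a * b)) * a := by rw [hr]
        _ = T m n * F 5 := by
            show T m n * (a * b) * a = T m n * (a * (b * a))
            simp only [mul_assoc]

lemma refl_finOrder {x : G} (hx : IsRefl x) : IsOfFinOrder x := by
  obtain ⟨i, t, rfl⟩ := hx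
  have hsq : (PresentedGroup.of i : G) * PresentedGroup.of i = 1 := by
    fin_cases i
    exacts [haa1, hbb1, hcc1]
  refine isOfFinOrder_iff_pow_eq_one.mpr ⟨2, two_pos, ?_⟩
  rw [pow_two]
  calc (t * PresentedGroup.of i * t⁻¹) * (t * PresentedGroup.of i * t⁻¹)
      = t * (PresentedGroup.of i * PresentedGroup.of i) * t⁻¹ := by
        simp only [mul_assoc, inv_mul_cancel_left]
    _ = 1 := by rw [hsq, mul_one, mul_inv_cancel]

end Tri

theorem stmt_15 :
    (∀ g : PresentedGroup rels333, ∃ l : List (PresentedGroup rels333),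
      l.length ≤ 4 ∧
      (∀ x ∈ l, ∃ (i : Fin 3) (t : PresentedGroup rels333),
        x = t * PresentedGroup.of i * t⁻¹) ∧
      l.prod = g) ∧
    ∃ M : ℕ, ∀ g : PresentedGroup rels333, ∃ l : List (PresentedGroup rels333),
      (∀ x ∈ l, IsOfFinOrder x) ∧ l.length ≤ M ∧ l.prod = g := by
  constructor
  · intro g
    obtain ⟨l, h4, hrefl, hprod⟩ := Tri.main_decomp g
    exact ⟨l, h4, fun x hx => hrefl x hx, hprod⟩
  · refine ⟨4, fun g => ?_⟩
    obtain ⟨l, h4, hrefl, hprod⟩ := Tri.main_decomp g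
    exact ⟨l, fun x hx => Tri.refl_finOrder (hrefl x hx), h4, hprod⟩
end

section
/- Consider the linear program: minimize 1 − x_p − y_q subject to x_1 + p·x_p = 1, y_1 + q·y_q = 1, x_1 + x_p + y_1 + y_q ≥ 1, and x_1, x_p, y_1, y_q ≥ 0, where 2 ≤ p ≤ q are integers. Then the minimum value equals 1 − q/(p(q−1)), achieved at x_1 = 0, x_p = 1/p, y_1 = (pq−p−q)/(p(q−1)), y_q = 1/(p(q−1)). -/
/-- The linear program computing `stl(ab)` in `ℤ/p * ℤ/q`:
minimize `1 − x_p − y_q` subject to `x₁ + p x_p = 1`, `y₁ + q y_q = 1`,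
`x₁ + x_p + y₁ + y_q ≥ 1` and nonnegativity. The minimum is
`1 − q/(p(q−1))`, achieved at `x₁ = 0`, `x_p = 1/p`,
`y₁ = (pq−p−q)/(p(q−1))`, `y_q = 1/(p(q−1))`. -/
theorem stmt_17 (p q : ℕ) (hp : 2 ≤ p) (hpq : p ≤ q) :
    IsLeast {v : ℝ | ∃ x1 xp y1 yq : ℝ,
        0 ≤ x1 ∧ 0 ≤ xp ∧ 0 ≤ y1 ∧ 0 ≤ yq ∧
        x1 + p * xp = 1 ∧ y1 + q * yq = 1 ∧
        1 ≤ x1 + xp + y1 + yq ∧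
        v = 1 - xp - yq}
      (1 - q / (p * (q - 1))) ∧
    ((0 : ℝ) ≤ (0 : ℝ) ∧ 0 ≤ (1 : ℝ) / p ∧
      0 ≤ ((p * q - p - q : ℝ)) / (p * (q - 1)) ∧ 0 ≤ (1 : ℝ) / (p * (q - 1)) ∧
      (0 : ℝ) + p * (1 / p) = 1 ∧
      (p * q - p - q : ℝ) / (p * (q - 1)) + q * (1 / (p * (q - 1))) = 1 ∧
      1 ≤ (0 : ℝ) + 1 / p + (p * q - p - q) / (p * (q - 1)) + 1 / (p * (q - 1)) ∧
      1 - q / (p * (q - 1)) = 1 - (1 : ℝ) / p - 1 / (p * (q - 1))) := by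
  have hP : (2 : ℝ) ≤ (p : ℝ) := by exact_mod_cast hp
  have hPQ : (p : ℝ) ≤ (q : ℝ) := by exact_mod_cast hpq
  have hp0 : (0 : ℝ) < p := by linarith
  have hq1 : (0 : ℝ) < (q : ℝ) - 1 := by linarith
  have hd : (0 : ℝ) < (p : ℝ) * ((q : ℝ) - 1) := mul_pos hp0 hq1
  have hnum : (0 : ℝ) ≤ (p : ℝ) * q - p - q := by nlinarith
  constructor
  · constructor
    · exact ⟨0, 1 / p, ((p : ℝ) * q - p - q) / (p * (q - 1)), 1 / (p * (q - 1)),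
        le_refl 0, by positivity, div_nonneg hnum hd.le, by positivity,
        by field_simp; norm_num, by field_simp; ring, by
          have h : (0:ℝ) + 1 / p + ((p : ℝ) * q - p - q) / (p * (q - 1)) + 1 / (p * (q - 1)) = 1 := by
            field_simp; ring
          linarith,
        by field_simp; ring⟩
    · rintro v ⟨x1, xp, y1, yq, hx1, hxp, hy1, hyq, he1, he2, hsum, rfl⟩
      have h1 : xp + yq ≤ (q : ℝ) / (p * (q - 1)) := by
        rw [le_div_iff₀ hd]
        nlinarith [mul_nonneg (sub_nonneg.2 hPQ) (sub_nonneg.2 hxp),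
          mul_nonneg hy1 hq1.le, mul_nonneg hx1 hq1.le,
          mul_nonneg (sub_nonneg.2 hPQ) hxp]
      linarith
  · refine ⟨le_refl 0, by positivity, div_nonneg hnum hd.le, by positivity,
      by field_simp; norm_num, by field_simp; ring, ?_, ?_⟩
    · have h : (0:ℝ) + 1 / p + ((p : ℝ) * q - p - q) / (p * (q - 1)) + 1 / (p * (q - 1)) = 1 := by
        field_simp; ring
      linarith
    · field_simp; ring
end

section
/- Consider the linear program: minimize 1 − 2x_p − 2y_q subject to x_1 + p·x_p + Σ_{k=1}^p (k−1)z_k = Σ_{k=1}^q w_k, y_1 + q·y_q + Σ_{k=1}^q (k−1)w_k = Σ_{k=1}^p z_k, Σ_{k=1}^q w_k + Σ_{k=1}^p z_k = 1, x_1 + x_p + y_1 + y_q ≥ 1/2, with all variables nonnegative, where p, q ≥ 2 are integers. Then the minimum value equals 1 − 1/(min(p,q) − 1). -/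
open Finset

lemma aux_sum_ite (n : ℕ) (hn : 1 ≤ n) (c : ℝ) :
    ∑ k ∈ Icc 1 n, (if k = 1 then c else 0) = c := by
  rw [Finset.sum_ite_eq' (Icc 1 n) 1 (fun _ => c)]
  simp [hn]

lemma aux_sum_ite2 (n : ℕ) (c : ℝ) :
    ∑ k ∈ Icc 1 n, ((k : ℝ) - 1) * (if k = 1 then c else 0) = 0 := by
  apply Finset.sum_eq_zero
  intro k _
  by_cases h : k = 1
  · subst h; simp
  · simp [h]

open Finset in
/-- The linear program computing `stl([a,b])` in `ℤ/p * ℤ/q`: its minimum value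
is `1 − 1/(min(p,q) − 1)`. -/
theorem stmt_18 (p q : ℕ) (hp : 2 ≤ p) (hq : 2 ≤ q) :
    IsLeast {v : ℝ | ∃ (x1 xp y1 yq : ℝ) (z w : ℕ → ℝ),
        0 ≤ x1 ∧ 0 ≤ xp ∧ 0 ≤ y1 ∧ 0 ≤ yq ∧
        (∀ k, 0 ≤ z k) ∧ (∀ k, 0 ≤ w k) ∧
        x1 + p * xp + (∑ k ∈ Icc 1 p, ((k : ℝ) - 1) * z k) = (∑ k ∈ Icc 1 q, w k) ∧
        y1 + q * yq + (∑ k ∈ Icc 1 q, ((k : ℝ) - 1) * w k) = (∑ k ∈ Icc 1 p, z k) ∧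
        (∑ k ∈ Icc 1 q, w k) + (∑ k ∈ Icc 1 p, z k) = 1 ∧
        1 / 2 ≤ x1 + xp + y1 + yq ∧
        v = 1 - 2 * xp - 2 * yq}
      (1 - 1 / ((min p q : ℝ) - 1)) := by
  have hp1 : 1 ≤ p := le_trans (by norm_num) hp
  have hq1 : 1 ≤ q := le_trans (by norm_num) hq
  have hpr : (2:ℝ) ≤ (p:ℝ) := by exact_mod_cast hp
  have hqr : (2:ℝ) ≤ (q:ℝ) := by exact_mod_cast hq
  constructor
  · -- membership
    rcases le_total p q with hpq | hpq
    · have hmin : min (p:ℝ) (q:ℝ) = (p:ℝ) :=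
        min_eq_left (by exact_mod_cast hpq)
      set a := (p:ℝ) with ha
      have ha1 : (0:ℝ) < a - 1 := by linarith
      have ha2 : (0:ℝ) ≤ a - 2 := by linarith
      refine ⟨0, 1/(2*(a-1)), (a-2)/(2*(a-1)), 0,
        (fun k => if k = 1 then (a-2)/(2*(a-1)) else 0),
        (fun k => if k = 1 then a/(2*(a-1)) else 0),
        le_refl 0, by positivity, div_nonneg ha2 (by linarith), le_refl 0,
        ?_, ?_, ?_, ?_, ?_, ?_, ?_⟩
      · intro k; dsimp only; split
        · exact div_nonneg ha2 (by linarith)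
        · exact le_refl 0
      · intro k; dsimp only; split <;> positivity
      · rw [aux_sum_ite2, aux_sum_ite q hq1]
        field_simp
        ring
      · rw [aux_sum_ite2, aux_sum_ite p hp1]
        ring
      · rw [aux_sum_ite q hq1, aux_sum_ite p hp1]
        field_simp
        ring
      · have h12 : (0:ℝ) + 1/(2*(a-1)) + (a-2)/(2*(a-1)) + 0 = 1/2 := by
          field_simp
          ring
        linarith
      · rw [hmin]
        rw [show (1:ℝ) - 2 * (1/(2*(a-1))) - 2*0 = 1 - 1/(a-1) by field_simp; ring]
    · have hmin : min (p:ℝ) (q:ℝ) = (q:ℝ) :=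
        min_eq_right (by exact_mod_cast hpq)
      set a := (q:ℝ) with ha
      have ha1 : (0:ℝ) < a - 1 := by linarith
      have ha2 : (0:ℝ) ≤ a - 2 := by linarith
      refine ⟨(a-2)/(2*(a-1)), 0, 0, 1/(2*(a-1)),
        (fun k => if k = 1 then a/(2*(a-1)) else 0),
        (fun k => if k = 1 then (a-2)/(2*(a-1)) else 0),
        div_nonneg ha2 (by linarith), le_refl 0, le_refl 0, by positivity,
        ?_, ?_, ?_, ?_, ?_, ?_, ?_⟩
      · intro k; dsimp only; split <;> positivity
      · intro k; dsimp only; split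
        · exact div_nonneg ha2 (by linarith)
        · exact le_refl 0
      · rw [aux_sum_ite2, aux_sum_ite q hq1]
        ring
      · rw [aux_sum_ite2, aux_sum_ite p hp1]
        field_simp
        ring
      · rw [aux_sum_ite q hq1, aux_sum_ite p hp1]
        field_simp
        ring
      · have h12 : (a-2)/(2*(a-1)) + 0 + 0 + 1/(2*(a-1)) = 1/2 := by
          field_simp
          ring
        linarith
      · rw [hmin]
        rw [show (1:ℝ) - 2*0 - 2 * (1/(2*(a-1))) = 1 - 1/(a-1) by field_simp; ring]
  · -- lower bound
    rintro v ⟨x1, xp, y1, yq, z, w, hx1, hxp, hy1, hyq, hz, hw, hA, hB, hC, hD, hv⟩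
    have hSz : 0 ≤ ∑ k ∈ Icc 1 p, ((k : ℝ) - 1) * z k := by
      apply Finset.sum_nonneg
      intro k hk
      have h1 : 1 ≤ k := (Finset.mem_Icc.mp hk).1
      have h1' : (1:ℝ) ≤ k := by exact_mod_cast h1
      exact mul_nonneg (by linarith) (hz k)
    have hSw : 0 ≤ ∑ k ∈ Icc 1 q, ((k : ℝ) - 1) * w k := by
      apply Finset.sum_nonneg
      intro k hk
      have h1 : 1 ≤ k := (Finset.mem_Icc.mp hk).1
      have h1' : (1:ℝ) ≤ k := by exact_mod_cast h1
      exact mul_nonneg (by linarith) (hw k)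
    set m : ℝ := min (p:ℝ) (q:ℝ) with hm
    have hmp : m ≤ (p:ℝ) := min_le_left _ _
    have hmq : m ≤ (q:ℝ) := min_le_right _ _
    have hm2 : (2:ℝ) ≤ m := le_min hpr hqr
    have key : ((p:ℝ)-1) * xp + ((q:ℝ)-1) * yq ≤ 1/2 := by nlinarith
    have key2 : (m - 1) * (xp + yq) ≤ 1/2 := by nlinarith
    have hm1 : (0:ℝ) < m - 1 := by linarith
    have hfin : 2 * xp + 2 * yq ≤ 1 / (m - 1) := by
      rw [le_div_iff₀ hm1]
      nlinarith
    rw [hv]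
    linarith
end
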